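/- Let (ζ_t^O : t ≥ 0) be the standard specifications randomly fluctuating intervals process with expansion parameter p ∈ (0,1) started from ζ_0 = {0}. Then for every t ≥ 0 and every integer x ≥ 0, P(x ∈ ζ_t^O) ≥ P(x + 1 ∈ ζ_t^O). -/

import Mathlib

/- The standard specifications randomly fluctuating intervals process.
States: `none` = empty set, `some (l, r)` with `l ≤ r` = the integer interval {l, ..., r}. -/

open MeasureTheory
open scoped ENNReal

namespace RFI

abbrev State := Option (ℤ × ℤ)

/-- Geometric distribution on ℕ: P(N = n) = (1 - p) * p ^ n. -/
noncomputable def geom (p : ℝ≥0∞) (hp : p < 1) : PMF ℕ :=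
  ⟨fun n => (1 - p) * p ^ n, by
    refine ENNReal.summable.hasSum_iff.mpr ?_
    rw [ENNReal.tsum_mul_left, ENNReal.tsum_geometric]
    exact ENNReal.mul_inv_cancel
      (fun h => (not_le.mpr hp) (tsub_eq_zero_iff_le.mp h))
      (lt_of_le_of_lt tsub_le_self ENNReal.one_lt_top).ne⟩

/-- All integer subintervals of {l, ..., r}, including the empty set. -/
noncomputable def subIntervals (l r : ℤ) : Finset State :=
  insert none
    (((Finset.Icc l r ×ˢ Finset.Icc l r).filter (fun q => q.1 ≤ q.2)).image
      (fun q => some q))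

/-- Transition kernel: a uniform contraction followed by independent
geometric expansions of the two endpoints; the empty set is absorbing. -/
noncomputable def step (p : ℝ≥0∞) (hp : p < 1) : State → PMF State
  | none => PMF.pure none
  | some (l, r) =>
      (PMF.uniformOfFinset (subIntervals l r) (Finset.insert_nonempty _ _)).bind fun c =>
        match c with
        | none => PMF.pure none
        | some (a, b) =>
            (geom p hp).bind fun nL =>
              (geom p hp).bind fun nR =>
                PMF.pure (some (a - nL, b + nR))

/-- Distribution at time `t` of the process started from `init`. -/
noncomputable def dist (p : ℝ≥0∞) (hp : p < 1) (init : State) : ℕ → PMF State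
  | 0 => PMF.pure init
  | t + 1 => (dist p hp init t).bind (step p hp)

/-- `x` is occupied, i.e. belongs to the interval represented by the state. -/
def memS (x : ℤ) : State → Prop
  | none => False
  | some (l, r) => l ≤ x ∧ x ≤ r

/-- Occupancy function: probability that `x` belongs to the process at time `t`,
started from the singleton {a}. -/
noncomputable def occ (p : ℝ≥0∞) (hp : p < 1) (a : ℤ) (t : ℕ) (x : ℤ) : ℝ≥0∞ :=
  (dist p hp (some (a, a)) t).toOuterMeasure {s | memS x s}

-- ### auxiliary definitions

noncomputable def G (p : ℝ≥0∞) (d : ℤ) : ℝ≥0∞ := if 0 ≤ d then (1 - p) * p ^ d.toNat else 0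

noncomputable def pairs (l0 r0 : ℤ) : Finset (ℤ × ℤ) :=
  (Finset.Icc l0 r0 ×ˢ Finset.Icc l0 r0).filter (fun q => q.1 ≤ q.2)

lemma geom_apply (p : ℝ≥0∞) (hp : p < 1) (n : ℕ) : geom p hp n = (1 - p) * p ^ n := rfl

lemma tsum_geom_pick (p : ℝ≥0∞) (hp : p < 1) (d : ℤ) (v : ℝ≥0∞) :
    (∑' n : ℕ, geom p hp n * (if d = (n : ℤ) then v else 0)) = G p d * v := by
  by_cases hd : 0 ≤ d
  · rw [tsum_eq_single d.toNat]
    · have hd2 : d = ((d.toNat : ℕ) : ℤ) := by omega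
      rw [if_pos hd2]
      simp only [geom_apply, G, if_pos hd]
    · intro n hn
      have : ¬ (d = (n : ℤ)) := by omega
      simp [this]
  · have h0 : ∀ n : ℕ, geom p hp n * (if d = (n : ℤ) then v else 0) = 0 := by
      intro n
      have : ¬ (d = (n : ℤ)) := by omega
      simp [this]
    simp only [h0, tsum_zero, G, if_neg hd, zero_mul]

lemma F_eval (p : ℝ≥0∞) (hp : p < 1) (a b l r : ℤ) :
    ((geom p hp).bind fun nL => (geom p hp).bind fun nR =>
        PMF.pure (some (a - nL, b + nR) : State)) (some (l, r))
      = G p (a - l) * G p (r - b) := by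
  rw [PMF.bind_apply]
  have h1 : ∀ nL : ℕ, ((geom p hp).bind fun nR =>
      PMF.pure (some (a - nL, b + nR) : State)) (some (l, r))
      = (if a - l = (nL : ℤ) then 1 else 0) * G p (r - b) := by
    intro nL
    rw [PMF.bind_apply]
    by_cases h : a - l = (nL : ℤ)
    · rw [if_pos h, one_mul]
      have h2 : ∀ nR : ℕ,
          (PMF.pure (some (a - nL, b + nR) : State)) (some (l, r))
            = (if r - b = (nR : ℤ) then (1:ℝ≥0∞) else 0) := by
        intro nR
        rw [PMF.pure_apply]
        by_cases h3 : r - b = (nR : ℤ)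
        · rw [if_pos h3, if_pos]
          simp only [Option.some.injEq, Prod.mk.injEq]
          omega
        · rw [if_neg h3, if_neg]
          simp only [Option.some.injEq, Prod.mk.injEq, not_and]
          omega
      simp only [h2]
      rw [tsum_geom_pick p hp (r - b) 1, mul_one]
    · rw [if_neg h, zero_mul]
      have h2 : ∀ nR : ℕ, geom p hp nR *
          (PMF.pure (some (a - nL, b + nR) : State)) (some (l, r)) = 0 := by
        intro nR
        rw [PMF.pure_apply, if_neg, mul_zero]
        simp only [Option.some.injEq, Prod.mk.injEq, not_and]
        omega
      simp only [h2, tsum_zero]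
  simp only [h1]
  calc (∑' nL : ℕ, geom p hp nL * ((if a - l = (nL:ℤ) then 1 else 0) * G p (r - b)))
      = (∑' nL : ℕ, (geom p hp nL * (if a - l = (nL:ℤ) then 1 else 0)) * G p (r - b)) := by
        simp only [mul_assoc]
    _ = (∑' nL : ℕ, geom p hp nL * (if a - l = (nL:ℤ) then 1 else 0)) * G p (r - b) :=
        ENNReal.tsum_mul_right
    _ = (G p (a - l) * 1) * G p (r - b) := by rw [tsum_geom_pick]
    _ = G p (a - l) * G p (r - b) := by rw [mul_one]

lemma none_not_mem_image (s : Finset (ℤ × ℤ)) :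
    (none : State) ∉ s.image (fun q => some q) := by simp

noncomputable def contractFn (p : ℝ≥0∞) (hp : p < 1) : State → PMF State
  | none => PMF.pure none
  | some (a, b) =>
      (geom p hp).bind fun nL =>
        (geom p hp).bind fun nR =>
          PMF.pure (some (a - nL, b + nR))

lemma subIntervals_nonempty (l0 r0 : ℤ) : (subIntervals l0 r0).Nonempty :=
  Finset.insert_nonempty _ _

lemma step_eq (p : ℝ≥0∞) (hp : p < 1) (l0 r0 : ℤ) :
    step p hp (some (l0, r0)) =
      (PMF.uniformOfFinset (subIntervals l0 r0) (subIntervals_nonempty l0 r0)).bind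
        (contractFn p hp) := rfl

lemma step_apply (p : ℝ≥0∞) (hp : p < 1) (l0 r0 l r : ℤ) :
    step p hp (some (l0, r0)) (some (l, r))
      = ((subIntervals l0 r0).card : ℝ≥0∞)⁻¹ *
          ∑ q ∈ pairs l0 r0, G p (q.1 - l) * G p (r - q.2) := by
  rw [step_eq, PMF.bind_apply]
  rw [tsum_eq_sum (s := subIntervals l0 r0)
    (by
      intro c hc
      rw [PMF.uniformOfFinset_apply, if_neg hc, zero_mul])]
  simp only [PMF.uniformOfFinset_apply]
  have hsub : subIntervals l0 r0 = insert none ((pairs l0 r0).image (fun q => some q)) := rfl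
  rw [hsub, Finset.sum_insert (none_not_mem_image _)]
  have hnone : (contractFn p hp none) (some (l, r)) = 0 := by
    show (PMF.pure (none : State)) (some (l, r)) = 0
    rw [PMF.pure_apply, if_neg (by simp)]
  rw [hnone, mul_zero, zero_add]
  rw [Finset.sum_image (by intro x _ y _ h; exact Option.some.injEq _ _ ▸ h)]
  rw [Finset.mul_sum]
  refine Finset.sum_congr rfl ?_
  rintro ⟨a, b⟩ hq
  have hmem : (some (a, b) : State) ∈ insert none ((pairs l0 r0).image (fun q => some q)) := by
    rw [Finset.mem_insert]
    right
    exact Finset.mem_image_of_mem _ hq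
  rw [if_pos hmem]
  have hc : (contractFn p hp (some (a, b))) (some (l, r)) = G p (a - l) * G p (r - b) :=
    F_eval p hp a b l r
  rw [hc]

lemma step_none_apply (p : ℝ≥0∞) (hp : p < 1) (l r : ℤ) :
    step p hp none (some (l, r)) = 0 := by
  show (PMF.pure (none : State)) (some (l, r)) = 0
  rw [PMF.pure_apply, if_neg (by simp)]

lemma pairs_shift (l0 r0 : ℤ) :
    pairs (l0 + 1) (r0 + 1) = (pairs l0 r0).image (fun q => (q.1 + 1, q.2 + 1)) := by
  ext q
  simp only [pairs, Finset.mem_image, Finset.mem_filter, Finset.mem_product, Finset.mem_Icc]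
  constructor
  · rintro ⟨⟨⟨h1, h2⟩, h3, h4⟩, h5⟩
    refine ⟨(q.1 - 1, q.2 - 1), ⟨⟨⟨?_, ?_⟩, ?_, ?_⟩, ?_⟩, ?_⟩ <;>
      simp only [Prod.ext_iff] <;> omega
  · rintro ⟨⟨a1, a2⟩, ⟨⟨⟨h1, h2⟩, h3, h4⟩, h5⟩, h6⟩
    simp only [Prod.ext_iff] at h6
    obtain ⟨h7, h8⟩ := h6
    refine ⟨⟨⟨?_, ?_⟩, ?_, ?_⟩, ?_⟩ <;> omega

lemma pairs_refl (l0 r0 : ℤ) :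
    pairs (-r0) (-l0) = (pairs l0 r0).image (fun q => (-q.2, -q.1)) := by
  ext q
  simp only [pairs, Finset.mem_image, Finset.mem_filter, Finset.mem_product, Finset.mem_Icc]
  constructor
  · rintro ⟨⟨⟨h1, h2⟩, h3, h4⟩, h5⟩
    refine ⟨(-q.2, -q.1), ⟨⟨⟨?_, ?_⟩, ?_, ?_⟩, ?_⟩, ?_⟩ <;>
      simp only [Prod.ext_iff] <;> omega
  · rintro ⟨⟨a1, a2⟩, ⟨⟨⟨h1, h2⟩, h3, h4⟩, h5⟩, h6⟩
    simp only [Prod.ext_iff] at h6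
    obtain ⟨h7, h8⟩ := h6
    refine ⟨⟨⟨?_, ?_⟩, ?_, ?_⟩, ?_⟩ <;> omega

lemma card_shift (l0 r0 : ℤ) :
    (subIntervals (l0 + 1) (r0 + 1)).card = (subIntervals l0 r0).card := by
  have h1 : ∀ a b : ℤ, (subIntervals a b).card = (pairs a b).card + 1 := by
    intro a b
    have : subIntervals a b = insert none ((pairs a b).image (fun q => some q)) := rfl
    rw [this, Finset.card_insert_of_notMem (none_not_mem_image _),
      Finset.card_image_of_injective _ (fun x y h => Option.some.injEq _ _ ▸ h)]
  rw [h1, h1, pairs_shift,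
    Finset.card_image_of_injective _ (fun x y h => by
      simp only [Prod.ext_iff] at h ⊢; omega)]

lemma card_refl (l0 r0 : ℤ) :
    (subIntervals (-r0) (-l0)).card = (subIntervals l0 r0).card := by
  have h1 : ∀ a b : ℤ, (subIntervals a b).card = (pairs a b).card + 1 := by
    intro a b
    have : subIntervals a b = insert none ((pairs a b).image (fun q => some q)) := rfl
    rw [this, Finset.card_insert_of_notMem (none_not_mem_image _),
      Finset.card_image_of_injective _ (fun x y h => Option.some.injEq _ _ ▸ h)]
  rw [h1, h1, pairs_refl,
    Finset.card_image_of_injective _ (fun x y h => by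
      simp only [Prod.ext_iff] at h ⊢; omega)]

/-- Kernel translation covariance. -/
lemma K_shift (p : ℝ≥0∞) (hp : p < 1) (l0 r0 l r : ℤ) :
    step p hp (some (l0 + 1, r0 + 1)) (some (l + 1, r + 1))
      = step p hp (some (l0, r0)) (some (l, r)) := by
  have hinj : ∀ x ∈ pairs l0 r0, ∀ y ∈ pairs l0 r0,
      (fun q : ℤ × ℤ => (q.1 + 1, q.2 + 1)) x = (fun q : ℤ × ℤ => (q.1 + 1, q.2 + 1)) y →
      x = y := by
    intro x _ y _ h; simp only [Prod.ext_iff] at h ⊢; omega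
  rw [step_apply, step_apply, card_shift, pairs_shift, Finset.sum_image hinj]
  congr 1
  refine Finset.sum_congr rfl ?_
  intro q _
  congr 2 <;> ring

/-- Kernel reflection covariance. -/
lemma K_refl (p : ℝ≥0∞) (hp : p < 1) (l0 r0 l r : ℤ) :
    step p hp (some (-r0, -l0)) (some (-r, -l))
      = step p hp (some (l0, r0)) (some (l, r)) := by
  have hinj : ∀ x ∈ pairs l0 r0, ∀ y ∈ pairs l0 r0,
      (fun q : ℤ × ℤ => (-q.2, -q.1)) x = (fun q : ℤ × ℤ => (-q.2, -q.1)) y → x = y := by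
    intro x _ y _ h; simp only [Prod.ext_iff] at h ⊢; omega
  rw [step_apply, step_apply, card_refl, pairs_refl, Finset.sum_image hinj]
  congr 1
  refine Finset.sum_congr rfl ?_
  intro q _
  rw [mul_comm]
  congr 2 <;> ring

lemma G_neg (p : ℝ≥0∞) {d : ℤ} (hd : d < 0) : G p d = 0 := by
  rw [G, if_neg (by omega)]

lemma G_mul_G (p : ℝ≥0∞) {x y : ℤ} (hx : 0 ≤ x) (hy : 0 ≤ y) :
    G p x * G p y = ((1 - p) * (1 - p)) * p ^ (x.toNat + y.toNat) := by
  rw [G, G, if_pos hx, if_pos hy, pow_add]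
  ring

lemma sum_unim (p : ℝ≥0∞) (l0 r0 l r : ℤ) (h0 : 0 ≤ l0 + r0) (h1 : -1 ≤ l + r) :
    (∑ q ∈ pairs l0 r0, G p (q.1 - (-r - 1)) * G p ((-l - 1) - q.2))
      ≤ ∑ q ∈ pairs l0 r0, G p (q.1 - l) * G p (r - q.2) := by
  set c : ℤ := l + r + 1 + max (l0 - l) 0 - max (l0 + r + 1) 0 with hc
  set P' : Finset (ℤ × ℤ) := (pairs l0 r0).filter (fun q => -r - 1 ≤ q.1 ∧ q.2 ≤ -l - 1)
    with hP'
  clear_value c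
  have hmemP : ∀ q ∈ P', l0 ≤ q.1 ∧ q.1 ≤ r0 ∧ l0 ≤ q.2 ∧ q.2 ≤ r0 ∧ q.1 ≤ q.2 ∧
      -r - 1 ≤ q.1 ∧ q.2 ≤ -l - 1 := by
    intro q hq
    rw [hP', Finset.mem_filter, pairs, Finset.mem_filter, Finset.mem_product,
      Finset.mem_Icc, Finset.mem_Icc] at hq
    tauto
  have hkey : ∀ q ∈ P', l0 ≤ q.1 + c ∧ q.2 + c ≤ r0 ∧ l ≤ q.1 + c ∧ q.2 + c ≤ r := by
    intro q hq
    obtain ⟨a1, a2, a3, a4, a5, a6, a7⟩ := hmemP q hq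
    rcases le_total (l0 - l) 0 with hle1 | hle1 <;>
      rcases le_total (l0 + r + 1) 0 with hle2 | hle2 <;>
      first
      | (rw [hc, max_eq_right hle1, max_eq_right hle2]; omega)
      | (rw [hc, max_eq_right hle1, max_eq_left hle2]; omega)
      | (rw [hc, max_eq_left hle1, max_eq_right hle2]; omega)
      | (rw [hc, max_eq_left hle1, max_eq_left hle2]; omega)
  have h2 : (∑ q ∈ pairs l0 r0, G p (q.1 - (-r - 1)) * G p ((-l - 1) - q.2))
      = ∑ q ∈ P', G p (q.1 - (-r - 1)) * G p ((-l - 1) - q.2) := by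
    refine (Finset.sum_subset (Finset.filter_subset _ _) ?_).symm
    intro q hq hq'
    rw [Finset.mem_filter] at hq'
    have : ¬(-r - 1 ≤ q.1 ∧ q.2 ≤ -l - 1) := fun h => hq' ⟨hq, h⟩
    rcases not_and_or.mp this with h | h
    · rw [G_neg p (by omega : q.1 - (-r - 1) < 0), zero_mul]
    · rw [G_neg p (by omega : (-l - 1) - q.2 < 0), mul_zero]
  rw [h2]
  have hinj : ∀ x ∈ P', ∀ y ∈ P',
      (fun q : ℤ × ℤ => (q.1 + c, q.2 + c)) x = (fun q : ℤ × ℤ => (q.1 + c, q.2 + c)) y →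
      x = y := by
    intro x _ y _ h; simp only [Prod.ext_iff] at h ⊢; omega
  have h3 : (∑ q ∈ P', G p (q.1 - (-r - 1)) * G p ((-l - 1) - q.2))
      = ∑ q ∈ P'.image (fun q : ℤ × ℤ => (q.1 + c, q.2 + c)),
          G p (q.1 - l) * G p (r - q.2) := by
    rw [Finset.sum_image hinj]
    refine Finset.sum_congr rfl ?_
    intro q hq
    obtain ⟨a1, a2, a3, a4, a5, a6, a7⟩ := hmemP q hq
    obtain ⟨b1, b2, b3, b4⟩ := hkey q hq
    rw [G_mul_G p (by omega) (by omega), G_mul_G p (by omega) (by omega)]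
    congr 2
    omega
  rw [h3]
  refine Finset.sum_le_sum_of_subset ?_
  intro q hq
  rw [Finset.mem_image] at hq
  obtain ⟨q0, hq0, rfl⟩ := hq
  obtain ⟨a1, a2, a3, a4, a5, a6, a7⟩ := hmemP q0 hq0
  obtain ⟨b1, b2, b3, b4⟩ := hkey q0 hq0
  rw [pairs, Finset.mem_filter, Finset.mem_product, Finset.mem_Icc, Finset.mem_Icc]
  exact ⟨⟨⟨b1, by omega⟩, by omega, b2⟩, by omega⟩

/-- Kernel unimodality. -/
lemma K_unim (p : ℝ≥0∞) (hp : p < 1) (l0 r0 l r : ℤ) (h0 : 0 ≤ l0 + r0) (h1 : -1 ≤ l + r) :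
    step p hp (some (l0, r0)) (some (-r - 1, -l - 1))
      ≤ step p hp (some (l0, r0)) (some (l, r)) := by
  rw [step_apply, step_apply]
  exact mul_le_mul_right (sum_unim p l0 r0 l r h0 h1) _

lemma pairs_psi (l0 r0 : ℤ) :
    pairs (-r0 - 1) (-l0 - 1) = (pairs l0 r0).image (fun q => (-q.2 - 1, -q.1 - 1)) := by
  ext q
  simp only [pairs, Finset.mem_image, Finset.mem_filter, Finset.mem_product, Finset.mem_Icc]
  constructor
  · rintro ⟨⟨⟨h1, h2⟩, h3, h4⟩, h5⟩
    refine ⟨(-q.2 - 1, -q.1 - 1), ⟨⟨⟨?_, ?_⟩, ?_, ?_⟩, ?_⟩, ?_⟩ <;>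
      simp only [Prod.ext_iff] <;> omega
  · rintro ⟨⟨a1, a2⟩, ⟨⟨⟨h1, h2⟩, h3, h4⟩, h5⟩, h6⟩
    simp only [Prod.ext_iff] at h6
    obtain ⟨h7, h8⟩ := h6
    refine ⟨⟨⟨?_, ?_⟩, ?_, ?_⟩, ?_⟩ <;> omega

lemma card_psi (l0 r0 : ℤ) :
    (subIntervals (-r0 - 1) (-l0 - 1)).card = (subIntervals l0 r0).card := by
  have h1 : ∀ a b : ℤ, (subIntervals a b).card = (pairs a b).card + 1 := by
    intro a b
    have : subIntervals a b = insert none ((pairs a b).image (fun q => some q)) := rfl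
    rw [this, Finset.card_insert_of_notMem (none_not_mem_image _),
      Finset.card_image_of_injective _ (fun x y h => Option.some.injEq _ _ ▸ h)]
  rw [h1, h1, pairs_psi,
    Finset.card_image_of_injective _ (fun x y h => by
      simp only [Prod.ext_iff] at h ⊢; omega)]

/-- Kernel reflection-about `-1/2` covariance. -/
lemma K_psi (p : ℝ≥0∞) (hp : p < 1) (l0 r0 l r : ℤ) :
    step p hp (some (-r0 - 1, -l0 - 1)) (some (l, r))
      = step p hp (some (l0, r0)) (some (-r - 1, -l - 1)) := by
  have hinj : ∀ x ∈ pairs l0 r0, ∀ y ∈ pairs l0 r0,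
      (fun q : ℤ × ℤ => (-q.2 - 1, -q.1 - 1)) x = (fun q : ℤ × ℤ => (-q.2 - 1, -q.1 - 1)) y →
      x = y := by
    intro x _ y _ h; simp only [Prod.ext_iff] at h ⊢; omega
  rw [step_apply, step_apply, card_psi, pairs_psi, Finset.sum_image hinj]
  congr 1
  refine Finset.sum_congr rfl ?_
  intro q _
  rw [mul_comm]
  congr 2 <;> ring

/-- The rearrangement inequality in `ℝ≥0∞`. -/
lemma quad {a b c d : ℝ≥0∞} (hba : b ≤ a) (hdc : d ≤ c) :
    b * c + a * d ≤ a * c + b * d := by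
  obtain ⟨e, rfl⟩ : ∃ e, a = b + e := ⟨a - b, (tsub_add_cancel_of_le hba).symm.trans (add_comm _ _)⟩
  calc b * c + (b + e) * d = (b * c + b * d) + e * d := by ring
    _ ≤ (b * c + b * d) + e * c := add_le_add_right (mul_le_mul_right hdc _) _
    _ = (b + e) * c + b * d := by ring

def shiftE : State ≃ State where
  toFun s := s.map (fun q => (q.1 + 1, q.2 + 1))
  invFun s := s.map (fun q => (q.1 - 1, q.2 - 1))
  left_inv s := by rcases s with _ | ⟨a, b⟩ <;> simp
  right_inv s := by rcases s with _ | ⟨a, b⟩ <;> simp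

def psiE : State ≃ State where
  toFun s := s.map (fun q => (-q.2 - 1, -q.1 - 1))
  invFun s := s.map (fun q => (-q.2 - 1, -q.1 - 1))
  left_inv s := by rcases s with _ | ⟨a, b⟩ <;> simp
  right_inv s := by rcases s with _ | ⟨a, b⟩ <;> simp

def reflE : State ≃ State where
  toFun s := s.map (fun q => (-q.2, -q.1))
  invFun s := s.map (fun q => (-q.2, -q.1))
  left_inv s := by rcases s with _ | ⟨a, b⟩ <;> simp
  right_inv s := by rcases s with _ | ⟨a, b⟩ <;> simp

@[simp] lemma shiftE_none : shiftE none = none := rfl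
@[simp] lemma shiftE_some (a b : ℤ) : shiftE (some (a, b)) = some (a + 1, b + 1) := rfl
@[simp] lemma psiE_none : psiE none = none := rfl
@[simp] lemma psiE_some (a b : ℤ) : psiE (some (a, b)) = some (-b - 1, -a - 1) := rfl
@[simp] lemma reflE_none : reflE none = none := rfl
@[simp] lemma reflE_some (a b : ℤ) : reflE (some (a, b)) = some (-b, -a) := rfl

def Sym (μ : PMF State) : Prop := ∀ l r : ℤ, μ (some (l, r)) = μ (some (-r, -l))

def Mono (μ : PMF State) : Prop :=
  ∀ l r : ℤ, -1 ≤ l + r → μ (some (l + 1, r + 1)) ≤ μ (some (l, r))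

lemma sym_bind (p : ℝ≥0∞) (hp : p < 1) {μ : PMF State} (hS : Sym μ) :
    Sym (μ.bind (step p hp)) := by
  intro l r
  rw [PMF.bind_apply, PMF.bind_apply]
  rw [← Equiv.tsum_eq reflE (fun s => μ s * step p hp s (some (-r, -l)))]
  refine tsum_congr ?_
  rintro (_ | ⟨a, b⟩)
  · simp only [reflE_none, step_none_apply]
  · simp only [reflE_some]
    rw [K_refl p hp a b l r, ← hS a b]

lemma mono_bind (p : ℝ≥0∞) (hp : p < 1) {μ : PMF State} (hS : Sym μ) (hM : Mono μ) :
    Mono (μ.bind (step p hp)) := by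
  intro l r h1
  rw [PMF.bind_apply, PMF.bind_apply]
  have hL : (∑' s : State, μ s * step p hp s (some (l + 1, r + 1)))
      = ∑' s : State, μ (shiftE s) * step p hp s (some (l, r)) := by
    rw [← Equiv.tsum_eq shiftE (fun s => μ s * step p hp s (some (l + 1, r + 1)))]
    refine tsum_congr ?_
    rintro (_ | ⟨a, b⟩)
    · simp only [shiftE_none, step_none_apply]
    · simp only [shiftE_some]
      rw [K_shift p hp a b l r]
  rw [hL]
  set A : State → ℝ≥0∞ := fun s => μ (shiftE s) * step p hp s (some (l, r)) with hA
  set B : State → ℝ≥0∞ := fun s => μ s * step p hp s (some (l, r)) with hB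
  have key : ∀ s, A s + A (psiE s) ≤ B s + B (psiE s) := by
    rintro (_ | ⟨a, b⟩)
    · rw [hA, hB]
      simp only [psiE_none, shiftE_none, step_none_apply, mul_zero]
      exact le_rfl
    · rw [hA, hB]
      simp only [psiE_some, shiftE_some]
      have e1 : (-b - 1 + 1 : ℤ) = -b := by ring
      have e2 : (-a - 1 + 1 : ℤ) = -a := by ring
      rw [e1, e2]
      have hA0 : μ (some (-b, -a)) = μ (some (a, b)) := (hS a b).symm
      have hB0 : μ (some (-b - 1, -a - 1)) = μ (some (a + 1, b + 1)) := by
        have h := (hS (a + 1) (b + 1)).symm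
        have e3 : (-(b + 1) : ℤ) = -b - 1 := by ring
        have e4 : (-(a + 1) : ℤ) = -a - 1 := by ring
        rw [e3, e4] at h
        exact h
      rw [hA0, hB0]
      by_cases heq : a + b = -1
      · have e3 : (-b - 1 : ℤ) = a := by omega
        have e4 : (-a - 1 : ℤ) = b := by omega
        rw [e3, e4]
        exact le_of_eq (add_comm _ _)
      rcases le_or_gt 0 (a + b) with hab | hab
      · refine quad (hM a b (by omega)) ?_
        rw [K_psi p hp a b l r]
        exact K_unim p hp a b l r hab h1
      · have hab2 : a + b ≤ -2 := by omega
        have hAB : μ (some (a, b)) ≤ μ (some (a + 1, b + 1)) := by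
          have h := hM (-b - 1) (-a - 1) (by omega)
          rw [e1, e2] at h
          rw [hA0, hB0] at h
          exact h
        have hK : step p hp (some (a, b)) (some (l, r))
            ≤ step p hp (some (-b - 1, -a - 1)) (some (l, r)) := by
          have h5 := K_psi p hp (-b - 1) (-a - 1) l r
          have e3 : (-(-a - 1) - 1 : ℤ) = a := by ring
          have e4 : (-(-b - 1) - 1 : ℤ) = b := by ring
          rw [e3, e4] at h5
          rw [h5]
          exact K_unim p hp (-b - 1) (-a - 1) l r (by omega) h1
        calc μ (some (a + 1, b + 1)) * step p hp (some (a, b)) (some (l, r))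
              + μ (some (a, b)) * step p hp (some (-b - 1, -a - 1)) (some (l, r))
            = μ (some (a, b)) * step p hp (some (-b - 1, -a - 1)) (some (l, r))
              + μ (some (a + 1, b + 1)) * step p hp (some (a, b)) (some (l, r)) :=
              add_comm _ _
          _ ≤ μ (some (a + 1, b + 1)) * step p hp (some (-b - 1, -a - 1)) (some (l, r))
              + μ (some (a, b)) * step p hp (some (a, b)) (some (l, r)) := quad hAB hK
          _ = μ (some (a, b)) * step p hp (some (a, b)) (some (l, r))
              + μ (some (a + 1, b + 1)) * step p hp (some (-b - 1, -a - 1)) (some (l, r)) :=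
              add_comm _ _
  have h2 : (2 : ℝ≥0∞) * ∑' s, A s ≤ 2 * ∑' s, B s := by
    rw [two_mul, two_mul]
    calc (∑' s, A s) + ∑' s, A s = (∑' s, A s) + ∑' s, A (psiE s) := by
          rw [Equiv.tsum_eq psiE A]
      _ = ∑' s, (A s + A (psiE s)) := ENNReal.tsum_add.symm
      _ ≤ ∑' s, (B s + B (psiE s)) := ENNReal.tsum_le_tsum key
      _ = (∑' s, B s) + ∑' s, B (psiE s) := ENNReal.tsum_add
      _ = (∑' s, B s) + ∑' s, B s := by rw [Equiv.tsum_eq psiE B]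
  exact (ENNReal.mul_le_mul_iff_right two_ne_zero ENNReal.ofNat_ne_top).mp h2

lemma inv_dist (p : ℝ≥0∞) (hp : p < 1) (t : ℕ) :
    Sym (dist p hp (some (0, 0)) t) ∧ Mono (dist p hp (some (0, 0)) t) := by
  induction t with
  | zero =>
    constructor
    · intro l r
      show (PMF.pure (some ((0:ℤ), (0:ℤ)))) (some (l, r))
          = (PMF.pure (some ((0:ℤ), (0:ℤ)))) (some (-r, -l))
      rw [PMF.pure_apply, PMF.pure_apply]
      by_cases h : l = 0 ∧ r = 0
      · rw [if_pos (by simp [h.1, h.2]), if_pos (by simp [h.1, h.2])]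
      · rw [if_neg (by simp only [Option.some.injEq, Prod.mk.injEq]; omega),
          if_neg (by simp only [Option.some.injEq, Prod.mk.injEq]; omega)]
    · intro l r h
      show (PMF.pure (some ((0:ℤ), (0:ℤ)))) (some (l + 1, r + 1))
          ≤ (PMF.pure (some ((0:ℤ), (0:ℤ)))) (some (l, r))
      rw [PMF.pure_apply, if_neg (by simp only [Option.some.injEq, Prod.mk.injEq]; omega)]
      exact zero_le
  | succ t ih =>
    exact ⟨sym_bind p hp ih.1, mono_bind p hp ih.1 ih.2⟩

lemma chain {μ : PMF State} (hM : Mono μ) :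
    ∀ (k : ℕ) (l r : ℤ), -1 ≤ l + r → μ (some (l + k, r + k)) ≤ μ (some (l, r)) := by
  intro k
  induction k with
  | zero => intro l r _; simp
  | succ n ih =>
    intro l r h
    have e1 : (l + (n + 1 : ℕ) : ℤ) = (l + 1) + (n : ℕ) := by push_cast; ring
    have e2 : (r + (n + 1 : ℕ) : ℤ) = (r + 1) + (n : ℕ) := by push_cast; ring
    rw [e1, e2]
    exact le_trans (ih (l + 1) (r + 1) (by omega)) (hM l r h)

/-- Key comparison: an interval sticking out strictly to the right of `x ≥ 0` has smaller
probability than its reflection through `x + 1/2`. -/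
lemma mono_pair {μ : PMF State} (hS : Sym μ) (hM : Mono μ) (x r : ℤ) (hx : 0 ≤ x)
    (hr : x + 1 ≤ r) :
    μ (some (x + 1, r)) ≤ μ (some (2 * x + 1 - r, x)) := by
  rcases le_or_gt r (3 * x + 2) with hcase | hcase
  · have h := chain hM (r - x).toNat (2 * x + 1 - r) x (by omega)
    have e1 : (2 * x + 1 - r + ((r - x).toNat : ℤ)) = x + 1 := by omega
    have e2 : (x + ((r - x).toNat : ℤ)) = r := by omega
    rw [e1, e2] at h
    exact h
  · have h := chain hM (2 * x + 1).toNat (-x) (r - 2 * x - 1) (by omega)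
    have e1 : (-x + ((2 * x + 1).toNat : ℤ)) = x + 1 := by omega
    have e2 : (r - 2 * x - 1 + ((2 * x + 1).toNat : ℤ)) = r := by omega
    rw [e1, e2] at h
    have hsym : μ (some (2 * x + 1 - r, x)) = μ (some (-x, r - 2 * x - 1)) := by
      have h2 := hS (2 * x + 1 - r) x
      have e3 : (-(2 * x + 1 - r) : ℤ) = r - 2 * x - 1 := by ring
      rw [e3] at h2
      exact h2
    rw [hsym]
    exact h

def tau (x : ℤ) (s : State) : State :=
  match s with
  | none => none
  | some (l, r) =>
      if l = x + 1 ∧ x + 1 ≤ r then some (2 * x + 1 - r, x)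
      else if r = x ∧ l ≤ x then some (x + 1, 2 * x + 1 - l)
      else some (l, r)

lemma tau_some (x l r : ℤ) : tau x (some (l, r)) =
    if l = x + 1 ∧ x + 1 ≤ r then some (2 * x + 1 - r, x)
    else if r = x ∧ l ≤ x then some (x + 1, 2 * x + 1 - l)
    else some (l, r) := rfl

lemma tau_invol (x : ℤ) : Function.Involutive (tau x) := by
  rintro (_ | ⟨l, r⟩)
  · rfl
  · rw [tau_some]
    split_ifs with h1 h2
  

 
    · rw [tau_some, if_neg (by omega), if_pos (by omega)]
      simp only [Option.some.injEq, Prod.mk.injEq]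
      omega
    · rw [tau_some, if_pos (by omega)]
      simp only [Option.some.injEq, Prod.mk.injEq]
      omega
    · rw [tau_some, if_neg h1, if_neg h2]

lemma tsum_ind_le {μ : PMF State} (hS : Sym μ) (hM : Mono μ) (x : ℤ) (hx : 0 ≤ x) :
    (∑' s : State, {s : State | memS (x + 1) s}.indicator (⇑μ) s)
      ≤ ∑' s : State, {s : State | memS x s}.indicator (⇑μ) s := by
  have key : ∀ s : State, {s : State | memS (x + 1) s}.indicator (⇑μ) s
      ≤ {s : State | memS x s}.indicator (⇑μ) (tau x s) := by
    rintro (_ | ⟨l, r⟩)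
    · rw [Set.indicator_of_notMem (by simp [memS])]
      exact zero_le
    · by_cases hmem : l ≤ x + 1 ∧ x + 1 ≤ r
      · rw [Set.indicator_of_mem (by simpa [memS] using hmem)]
        by_cases hl : l = x + 1
        · rw [tau_some, if_pos ⟨hl, hmem.2⟩,
            Set.indicator_of_mem (by simp only [Set.mem_setOf_eq, memS]; omega)]
          subst hl
          exact mono_pair hS hM x r hx hmem.2
        · rw [tau_some, if_neg (by omega), if_neg (by omega),
            Set.indicator_of_mem (by simp only [Set.mem_setOf_eq, memS]; omega)]
      · rw [Set.indicator_of_notMem (by simpa [memS] using hmem)]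
        exact zero_le
  calc (∑' s : State, {s : State | memS (x + 1) s}.indicator (⇑μ) s)
      ≤ ∑' s : State, {s : State | memS x s}.indicator (⇑μ) (tau x s) :=
        ENNReal.tsum_le_tsum key
    _ = ∑' s : State, {s : State | memS x s}.indicator (⇑μ) s :=
        Equiv.tsum_eq ((tau_invol x).toPerm) _


/-- for the process started from {0} and x ≥ 0,
P(x ∈ ζ_t^O) ≥ P(x + 1 ∈ ζ_t^O). -/
theorem occupancy_decreasing_right (p : ℝ≥0∞) (hp0 : 0 < p) (hp1 : p < 1) (t : ℕ)
    (x : ℤ) (hx : 0 ≤ x) :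
    occ p hp1 0 t (x + 1) ≤ occ p hp1 0 t x := by
  have hI := inv_dist p hp1 t
  show (dist p hp1 (some (0, 0)) t).toOuterMeasure {s | memS (x + 1) s}
      ≤ (dist p hp1 (some (0, 0)) t).toOuterMeasure {s | memS x s}
  rw [PMF.toOuterMeasure_apply, PMF.toOuterMeasure_apply]
  exact tsum_ind_le hI.1 hI.2 x hx

end RFI
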